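/- Let (V, P, g) be 4-dimensional with tr P = 0. A curvature-like tensor L on V is a Riemannian P-tensor if and only if L = (1/8){τ(L)(π₁ + π₂) + τ*(L)π₃}, where τ(L) and τ*(L) are the scalar curvature and the associated scalar curvature of L. -/

import Mathlib

open scoped RealInnerProductSpace
open Module

variable {V : Type*} [NormedAddCommGroup V] [InnerProductSpace ℝ V]
  [FiniteDimensional ℝ V]

section AuxLemmas

set_option linter.unusedSectionVars false

/-- Transfer of diagonal sums between two expanding families. -/
lemma sum_diag_transfer {ι κ : Type*} [Fintype ι] [Fintype κ] (e : ι → V) (f : κ → V)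
    (he : ∀ x : V, ∑ i, ⟪e i, x⟫ • e i = x) (hf : ∀ x : V, ∑ j, ⟪f j, x⟫ • f j = x)
    (M : V →ₗ[ℝ] V) (hM : ∀ x y : V, ⟪M x, y⟫ = ⟪x, M y⟫)
    (B : V → V → ℝ)
    (hB1 : ∀ (c : ι → ℝ) (g : ι → V) (y : V), B (∑ i, c i • g i) y = ∑ i, c i * B (g i) y)
    (hB2 : ∀ (x : V) (c : κ → ℝ) (g : κ → V), B x (∑ j, c j • g j) = ∑ j, c j * B x (g j)) :
    ∑ i, B (e i) (M (e i)) = ∑ j, B (M (f j)) (f j) := by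
  calc ∑ i, B (e i) (M (e i))
      = ∑ i, B (e i) (∑ j, ⟪f j, M (e i)⟫ • f j) := by
        refine Finset.sum_congr rfl fun i _ => ?_; rw [hf]
    _ = ∑ i, ∑ j, ⟪f j, M (e i)⟫ * B (e i) (f j) := by
        refine Finset.sum_congr rfl fun i _ => hB2 _ _ _
    _ = ∑ j, ∑ i, ⟪e i, M (f j)⟫ * B (e i) (f j) := by
        rw [Finset.sum_comm]
        refine Finset.sum_congr rfl fun j _ => Finset.sum_congr rfl fun i _ => ?_
        rw [← hM, real_inner_comm (M (f j)) (e i)]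
    _ = ∑ j, B (∑ i, ⟪e i, M (f j)⟫ • e i) (f j) := by
        refine Finset.sum_congr rfl fun j _ => (hB1 _ _ _).symm
    _ = ∑ j, B (M (f j)) (f j) := by
        refine Finset.sum_congr rfl fun j _ => ?_; rw [he]

/-- Auxiliary determinant-like 2-form. -/
noncomputable def Dfun (p q x y : V) : ℝ := ⟪p, x⟫ * ⟪q, y⟫ - ⟪q, x⟫ * ⟪p, y⟫

/-- Decomposition of an antisymmetric bilinear form adapted to an orthonormal
4-frame with no mixed components. -/
lemma bilin_decomp (u0 u1 v0 v1 : V)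
    (hexp : ∀ x : V, x = ⟪u0,x⟫ • u0 + ⟪u1,x⟫ • u1 + ⟪v0,x⟫ • v0 + ⟪v1,x⟫ • v1)
    (B : V → V → ℝ)
    (hadd1 : ∀ a b y, B (a + b) y = B a y + B b y)
    (hsmul1 : ∀ (c : ℝ) a y, B (c • a) y = c * B a y)
    (hadd2 : ∀ x a b, B x (a + b) = B x a + B x b)
    (hsmul2 : ∀ (c : ℝ) x a, B x (c • a) = c * B x a)
    (hanti : ∀ x y, B x y = - B y x)
    (h00 : B u0 v0 = 0) (h01 : B u0 v1 = 0) (h10 : B u1 v0 = 0) (h11 : B u1 v1 = 0) :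
    ∀ x y, B x y = B u0 u1 * Dfun u0 u1 x y + B v0 v1 * Dfun v0 v1 x y := by
  have hxx : ∀ x, B x x = 0 := fun x => by have := hanti x x; linarith
  intro x y
  calc B x y = B (⟪u0,x⟫ • u0 + ⟪u1,x⟫ • u1 + ⟪v0,x⟫ • v0 + ⟪v1,x⟫ • v1)
               (⟪u0,y⟫ • u0 + ⟪u1,y⟫ • u1 + ⟪v0,y⟫ • v0 + ⟪v1,y⟫ • v1) := by
        rw [← hexp x, ← hexp y]
    _ = _ := by
        simp only [hadd1, hadd2, hsmul1, hsmul2]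
        rw [hanti u1 u0, hanti v1 v0, hanti v0 u0, hanti v0 u1, hanti v1 u0, hanti v1 u1]
        simp only [hxx, h00, h01, h10, h11, Dfun]
        ring

/-- Existence of an orthonormal frame adapted to an involutive trace-free isometry. -/
lemma adapted_basis (hdim : finrank ℝ V = 4) (P : V →ₗ[ℝ] V)
    (hP2 : ∀ x : V, P (P x) = x)
    (hPg : ∀ x y : V, ⟪P x, P y⟫ = ⟪x, y⟫)
    (htr : LinearMap.trace ℝ V P = 0) :
    ∃ u0 u1 v0 v1 : V, P u0 = u0 ∧ P u1 = u1 ∧ P v0 = -v0 ∧ P v1 = -v1 ∧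
      ⟪u0,u0⟫ = 1 ∧ ⟪u1,u1⟫ = 1 ∧ ⟪u0,u1⟫ = 0 ∧
      ⟪v0,v0⟫ = 1 ∧ ⟪v1,v1⟫ = 1 ∧ ⟪v0,v1⟫ = 0 ∧
      (∀ x : V, x = ⟪u0,x⟫ • u0 + ⟪u1,x⟫ • u1 + ⟪v0,x⟫ • v0 + ⟪v1,x⟫ • v1) := by
  classical
  set Vp : Submodule ℝ V := LinearMap.ker (LinearMap.id - P) with hVp
  set Vm : Submodule ℝ V := LinearMap.ker (LinearMap.id + P) with hVm
  have hVpmem : ∀ x : V, x ∈ Vp ↔ P x = x := by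
    intro x
    rw [hVp, LinearMap.mem_ker, LinearMap.sub_apply, LinearMap.id_apply, sub_eq_zero, eq_comm]
  have hVmmem : ∀ x : V, x ∈ Vm ↔ P x = -x := by
    intro x
    rw [hVm, LinearMap.mem_ker, LinearMap.add_apply, LinearMap.id_apply,
      add_eq_zero_iff_eq_neg]
    constructor
    · intro h; exact (neg_eq_iff_eq_neg.mpr h).symm
    · intro h; rw [h, neg_neg]
  have hprojp : LinearMap.IsProj Vp ((2⁻¹ : ℝ) • (LinearMap.id + P)) := by
    constructor
    · intro x
      rw [hVpmem]
      simp only [LinearMap.smul_apply, LinearMap.add_apply, LinearMap.id_apply,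
        map_smul, map_add, hP2]
      module
    · intro x hx
      rw [hVpmem] at hx
      simp only [LinearMap.smul_apply, LinearMap.add_apply, LinearMap.id_apply, hx]
      module
  have hprojm : LinearMap.IsProj Vm ((2⁻¹ : ℝ) • (LinearMap.id - P)) := by
    constructor
    · intro x
      rw [hVmmem]
      simp only [LinearMap.smul_apply, LinearMap.sub_apply, LinearMap.id_apply,
        map_smul, map_sub, hP2]
      module
    · intro x hx
      rw [hVmmem] at hx
      simp only [LinearMap.smul_apply, LinearMap.sub_apply, LinearMap.id_apply, hx]
      module
  have htrid : LinearMap.trace ℝ V LinearMap.id = (4 : ℝ) := by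
    rw [LinearMap.trace_id ℝ V, hdim]; norm_num
  have hrkp : finrank ℝ Vp = 2 := by
    have h1 := hprojp.trace
    have h2 : LinearMap.trace ℝ V ((2⁻¹ : ℝ) • (LinearMap.id + P)) = 2 := by
      rw [map_smul, map_add, htrid, htr]
      norm_num
    rw [h2] at h1
    exact_mod_cast h1.symm
  have hrkm : finrank ℝ Vm = 2 := by
    have h1 := hprojm.trace
    have h2 : LinearMap.trace ℝ V ((2⁻¹ : ℝ) • (LinearMap.id - P)) = 2 := by
      rw [map_smul, map_sub, htrid, htr]
      norm_num
    rw [h2] at h1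
    exact_mod_cast h1.symm
  set bp := (stdOrthonormalBasis ℝ Vp).reindex (finCongr hrkp) with hbp
  set bm := (stdOrthonormalBasis ℝ Vm).reindex (finCongr hrkm) with hbm
  set u0 : V := ↑(bp 0) with hu0d
  set u1 : V := ↑(bp 1) with hu1d
  set v0 : V := ↑(bm 0) with hv0d
  set v1 : V := ↑(bm 1) with hv1d
  have hPu0 : P u0 = u0 := (hVpmem _).mp (bp 0).2
  have hPu1 : P u1 = u1 := (hVpmem _).mp (bp 1).2
  have hPv0 : P v0 = -v0 := (hVmmem _).mp (bm 0).2
  have hPv1 : P v1 = -v1 := (hVmmem _).mp (bm 1).2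
  have onp : ∀ i j : Fin 2, ⟪(bp i : V), (bp j : V)⟫ = if i = j then 1 else 0 := by
    intro i j
    rw [← Submodule.coe_inner, orthonormal_iff_ite.mp bp.orthonormal]
  have onm : ∀ i j : Fin 2, ⟪(bm i : V), (bm j : V)⟫ = if i = j then 1 else 0 := by
    intro i j
    rw [← Submodule.coe_inner, orthonormal_iff_ite.mp bm.orthonormal]
  have hsubp : ∀ (y : V), y ∈ Vp → y = ⟪u0, y⟫ • u0 + ⟪u1, y⟫ • u1 := by
    intro y hy
    have h := bp.sum_repr' (⟨y, hy⟩ : Vp)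
    rw [Fin.sum_univ_two] at h
    have h2 := congrArg (Subtype.val : Vp → V) h
    simpa [Submodule.coe_inner, ← hu0d, ← hu1d] using h2.symm
  have hsubm : ∀ (y : V), y ∈ Vm → y = ⟪v0, y⟫ • v0 + ⟪v1, y⟫ • v1 := by
    intro y hy
    have h := bm.sum_repr' (⟨y, hy⟩ : Vm)
    rw [Fin.sum_univ_two] at h
    have h2 := congrArg (Subtype.val : Vm → V) h
    simpa [Submodule.coe_inner, ← hv0d, ← hv1d] using h2.symm
  have horth : ∀ s t : V, P s = s → P t = -t → ⟪s, t⟫ = 0 := by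
    intro s t hs ht
    have h := hPg s t
    rw [hs, ht, inner_neg_right] at h
    linarith
  refine ⟨u0, u1, v0, v1, hPu0, hPu1, hPv0, hPv1, by simpa using onp 0 0,
    by simpa using onp 1 1, by simpa using onp 0 1, by simpa using onm 0 0,
    by simpa using onm 1 1, by simpa using onm 0 1, ?_⟩
  intro x
  have hxp : P ((2⁻¹:ℝ) • (x + P x)) = (2⁻¹:ℝ) • (x + P x) := by
    rw [map_smul, map_add, hP2, add_comm]
  have hxm : P ((2⁻¹:ℝ) • (x - P x)) = -((2⁻¹:ℝ) • (x - P x)) := by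
    rw [map_smul, map_sub, hP2]; module
  have hdecp := hsubp _ ((hVpmem _).mpr hxp)
  have hdecm := hsubm _ ((hVmmem _).mpr hxm)
  have hsplit : x = (2⁻¹:ℝ) • (x + P x) + (2⁻¹:ℝ) • (x - P x) := by module
  have key : ∀ s : V, P s = s → ⟪s, (2⁻¹:ℝ) • (x + P x)⟫ = ⟪s, x⟫ := by
    intro s hs
    conv_rhs => rw [hsplit]
    rw [inner_add_right, horth s _ hs hxm, add_zero]
  have key' : ∀ s : V, P s = -s → ⟪s, (2⁻¹:ℝ) • (x - P x)⟫ = ⟪s, x⟫ := by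
    intro s hs
    conv_rhs => rw [hsplit]
    have h0 : ⟪s, (2⁻¹:ℝ) • (x + P x)⟫ = 0 := by
      rw [real_inner_comm]
      exact horth _ _ hxp hs
    rw [inner_add_right, h0, zero_add]
  rw [key u0 hPu0, key u1 hPu1] at hdecp
  rw [key' v0 hPv0, key' v1 hPv1] at hdecm
  calc x = (2⁻¹:ℝ) • (x + P x) + (2⁻¹:ℝ) • (x - P x) := hsplit
    _ = (⟪u0,x⟫ • u0 + ⟪u1,x⟫ • u1) + (⟪v0,x⟫ • v0 + ⟪v1,x⟫ • v1) := by
        rw [← hdecp, ← hdecm]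
    _ = ⟪u0,x⟫ • u0 + ⟪u1,x⟫ • u1 + ⟪v0,x⟫ • v0 + ⟪v1,x⟫ • v1 := by abel

end AuxLemmas

/-- The tensor ψ₁(S) built from a (0,2)-tensor S and the metric g. -/
noncomputable def psi1 (S : V → V → ℝ) (x y z w : V) : ℝ :=
  ⟪y, z⟫ * S x w - ⟪x, z⟫ * S y w + S y z * ⟪x, w⟫ - S x z * ⟪y, w⟫

/-- π₁ = (1/2)ψ₁(g). -/
noncomputable def pi1 (x y z w : V) : ℝ :=
  (1 / 2 : ℝ) * psi1 (fun a b : V => ⟪a, b⟫) x y z w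

/-- π₂ = (1/2)ψ₂(g), where ψ₂(S)(x,y,z,w) = ψ₁(S)(x,y,Pz,Pw). -/
noncomputable def pi2 (P : V →ₗ[ℝ] V) (x y z w : V) : ℝ :=
  (1 / 2 : ℝ) * psi1 (fun a b : V => ⟪a, b⟫) x y (P z) (P w)

/-- π₃ = ψ₁(g̃), where g̃(x,y) = g(x,Py). -/
noncomputable def pi3 (P : V →ₗ[ℝ] V) (x y z w : V) : ℝ :=
  psi1 (fun a b : V => ⟪a, P b⟫) x y z w

/-- The Ricci tensor ρ(L)(y,z) = Σᵢ L(eᵢ, y, z, eᵢ) of a (0,4)-tensor L,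
computed in an orthonormal basis. -/
noncomputable def ricci (L : V →ₗ[ℝ] V →ₗ[ℝ] V →ₗ[ℝ] V →ₗ[ℝ] ℝ) (y z : V) : ℝ :=
  ∑ i, L (stdOrthonormalBasis ℝ V i) y z (stdOrthonormalBasis ℝ V i)

/-- The scalar curvature τ(L) = Σⱼ ρ(L)(eⱼ, eⱼ). -/
noncomputable def scalarCurv (L : V →ₗ[ℝ] V →ₗ[ℝ] V →ₗ[ℝ] V →ₗ[ℝ] ℝ) : ℝ :=
  ∑ j, ricci L (stdOrthonormalBasis ℝ V j) (stdOrthonormalBasis ℝ V j)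

/-- The associated Ricci tensor ρ*(L)(y,z) = Σᵢ L(eᵢ, y, z, Peᵢ). -/
noncomputable def ricciStar (P : V →ₗ[ℝ] V)
    (L : V →ₗ[ℝ] V →ₗ[ℝ] V →ₗ[ℝ] V →ₗ[ℝ] ℝ) (y z : V) : ℝ :=
  ∑ i, L (stdOrthonormalBasis ℝ V i) y z (P (stdOrthonormalBasis ℝ V i))

/-- The associated scalar curvature τ*(L) = Σⱼ ρ*(L)(eⱼ, eⱼ). -/
noncomputable def scalarCurvStar (P : V →ₗ[ℝ] V)
    (L : V →ₗ[ℝ] V →ₗ[ℝ] V →ₗ[ℝ] V →ₗ[ℝ] ℝ) : ℝ :=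
  ∑ j, ricciStar P L (stdOrthonormalBasis ℝ V j) (stdOrthonormalBasis ℝ V j)

set_option maxHeartbeats 4000000 in
/-- Let (V, P, g) be 4-dimensional with tr P = 0. A
curvature-like tensor L on V is a Riemannian P-tensor if and only if
L = (1/8){τ(L)(π₁ + π₂) + τ*(L)π₃}. -/
theorem riemannian_P_tensor_iff_form_dim4
    (hdim : finrank ℝ V = 4)
    (P : V →ₗ[ℝ] V)
    (hP2 : ∀ x : V, P (P x) = x)
    (hPg : ∀ x y : V, ⟪P x, P y⟫ = ⟪x, y⟫)
    (htr : LinearMap.trace ℝ V P = 0)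
    (L : V →ₗ[ℝ] V →ₗ[ℝ] V →ₗ[ℝ] V →ₗ[ℝ] ℝ)
    (hA1 : ∀ x y z w : V, L x y z w = - L y x z w)
    (hA2 : ∀ x y z w : V, L x y z w = - L x y w z)
    (hBianchi : ∀ x y z w : V, L x y z w + L y z x w + L z x y w = 0) :
    (∀ x y z w : V, L x y (P z) (P w) = L x y z w) ↔
    (∀ x y z w : V,
      L x y z w = (1 / 8 : ℝ) *
        (scalarCurv L * (pi1 x y z w + pi2 P x y z w) +
          scalarCurvStar P L * pi3 P x y z w)) := by
  obtain ⟨u0, u1, v0, v1, hPu0, hPu1, hPv0, hPv1, o00, o11, o01, m00, m11, m01, hexp⟩ :=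
    adapted_basis hdim P hP2 hPg htr
  have o10 : ⟪u1,u0⟫ = 0 := by rw [real_inner_comm]; exact o01
  have m10 : ⟪v1,v0⟫ = 0 := by rw [real_inner_comm]; exact m01
  have horth : ∀ s t : V, P s = s → P t = -t → ⟪s, t⟫ = 0 := by
    intro s t hs ht
    have h := hPg s t
    rw [hs, ht, inner_neg_right] at h
    linarith
  have c00 : ⟪u0,v0⟫ = 0 := horth _ _ hPu0 hPv0
  have c01 : ⟪u0,v1⟫ = 0 := horth _ _ hPu0 hPv1
  have c10 : ⟪u1,v0⟫ = 0 := horth _ _ hPu1 hPv0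
  have c11 : ⟪u1,v1⟫ = 0 := horth _ _ hPu1 hPv1
  have r00 : ⟪v0,u0⟫ = 0 := by rw [real_inner_comm]; exact c00
  have r01 : ⟪v1,u0⟫ = 0 := by rw [real_inner_comm]; exact c01
  have r10 : ⟪v0,u1⟫ = 0 := by rw [real_inner_comm]; exact c10
  have r11 : ⟪v1,u1⟫ = 0 := by rw [real_inner_comm]; exact c11
  have hPsym : ∀ x y : V, ⟪P x, y⟫ = ⟪x, P y⟫ := by
    intro x y
    conv_lhs => rw [← hP2 y]
    exact hPg x (P y)
  have hpair : ∀ x y z w : V, L x y z w = L z w x y := by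
    intro x y z w
    have b1 := hBianchi x y z w
    have b2 := hBianchi y z w x
    have b3 := hBianchi z w x y
    have b4 := hBianchi w x y z
    linarith [hA2 y z w x, hA2 z w y x, hA1 w y z x, hA2 y w z x,
      hA2 w x z y, hA2 x z w y, hA2 x y w z, hA1 z x y w]
  -- Parseval-type identities
  have hg : ∀ s t : V, ⟪s,t⟫ =
      ⟪u0,s⟫*⟪u0,t⟫ + ⟪u1,s⟫*⟪u1,t⟫ + ⟪v0,s⟫*⟪v0,t⟫ + ⟪v1,s⟫*⟪v1,t⟫ := by
    intro s t
    conv_lhs => rw [hexp t]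
    simp only [inner_add_right, real_inner_smul_right]
    rw [real_inner_comm s u0, real_inner_comm s u1, real_inner_comm s v0, real_inner_comm s v1]
    ring
  have hgP : ∀ s t : V, ⟪s, P t⟫ =
      ⟪u0,s⟫*⟪u0,t⟫ + ⟪u1,s⟫*⟪u1,t⟫ - ⟪v0,s⟫*⟪v0,t⟫ - ⟪v1,s⟫*⟪v1,t⟫ := by
    intro s t
    conv_lhs => rw [hexp t]
    simp only [map_add, map_smul, hPu0, hPu1, hPv0, hPv1]
    simp only [inner_add_right, real_inner_smul_right, inner_neg_right]
    rw [real_inner_comm s u0, real_inner_comm s u1, real_inner_comm s v0, real_inner_comm s v1]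
    ring
  constructor
  · -- forward direction
    intro hL
    have hLfirst : ∀ x y z w : V, L (P x) (P y) z w = L x y z w := by
      intro x y z w
      rw [hpair (P x) (P y) z w, hL z w x y]
      exact (hpair x y z w).symm
    have hvanL : ∀ x y z w : V, P z = z → P w = -w → L x y z w = 0 := by
      intro x y z w hz hw
      have h := hL x y z w
      rw [hz, hw, map_neg] at h
      linarith
    have hvanL' : ∀ x y z w : V, P z = -z → P w = w → L x y z w = 0 := by
      intro x y z w hz hw
      have h := hA2 x y z w
      rw [hvanL x y w z hw hz] at h
      simpa using h
    have hvanF : ∀ x y z w : V, P x = x → P y = -y → L x y z w = 0 := by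
      intro x y z w hx hy
      rw [hpair]
      exact hvanL _ _ _ _ hx hy
    have hvanF' : ∀ x y z w : V, P x = -x → P y = y → L x y z w = 0 := by
      intro x y z w hx hy
      rw [hpair]
      exact hvanL' _ _ _ _ hx hy
    have hD1 : ∀ z w x y : V, L x y z w =
        L u0 u1 z w * Dfun u0 u1 x y + L v0 v1 z w * Dfun v0 v1 x y := by
      intro z w
      exact bilin_decomp u0 u1 v0 v1 hexp (fun p q => L p q z w)
        (by intro p q y; simp) (by intro c p y; simp)
        (by intro x p q; simp) (by intro c x p; simp)
        (fun p q => hA1 p q z w)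
        (hvanF u0 v0 z w hPu0 hPv0) (hvanF u0 v1 z w hPu0 hPv1)
        (hvanF u1 v0 z w hPu1 hPv0) (hvanF u1 v1 z w hPu1 hPv1)
    have hDu : ∀ z w : V, L u0 u1 z w =
        L u0 u1 u0 u1 * Dfun u0 u1 z w + L u0 u1 v0 v1 * Dfun v0 v1 z w := by
      exact bilin_decomp u0 u1 v0 v1 hexp (fun p q => L u0 u1 p q)
        (by intro p q y; simp) (by intro c p y; simp)
        (by intro x p q; simp) (by intro c x p; simp)
        (fun p q => hA2 u0 u1 p q)
        (hvanL u0 u1 u0 v0 hPu0 hPv0) (hvanL u0 u1 u0 v1 hPu0 hPv1)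
        (hvanL u0 u1 u1 v0 hPu1 hPv0) (hvanL u0 u1 u1 v1 hPu1 hPv1)
    have hDv : ∀ z w : V, L v0 v1 z w =
        L v0 v1 u0 u1 * Dfun u0 u1 z w + L v0 v1 v0 v1 * Dfun v0 v1 z w := by
      exact bilin_decomp u0 u1 v0 v1 hexp (fun p q => L v0 v1 p q)
        (by intro p q y; simp) (by intro c p y; simp)
        (by intro x p q; simp) (by intro c x p; simp)
        (fun p q => hA2 v0 v1 p q)
        (hvanL v0 v1 u0 v0 hPu0 hPv0) (hvanL v0 v1 u0 v1 hPu0 hPv1)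
        (hvanL v0 v1 u1 v0 hPu1 hPv0) (hvanL v0 v1 u1 v1 hPu1 hPv1)
    have hc : L u0 u1 v0 v1 = 0 := by
      have hb := hBianchi u0 u1 v0 v1
      rw [hvanF u1 v0 u0 v1 hPu1 hPv0, hvanF' v0 u0 u1 v1 hPv0 hPu0] at hb
      linarith
    have hc' : L v0 v1 u0 u1 = 0 := by rw [hpair]; exact hc
    set a : ℝ := L u0 u1 u0 u1 with ha
    set b : ℝ := L v0 v1 v0 v1 with hbdef
    have hstruct : ∀ x y z w : V, L x y z w =
        a * (Dfun u0 u1 z w * Dfun u0 u1 x y) + b * (Dfun v0 v1 z w * Dfun v0 v1 x y) := by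
      intro x y z w
      rw [hD1 z w x y, hDu z w, hDv z w, hc, hc']
      ring
    -- the adapted family
    set ff : Fin 4 → V := ![u0, u1, v0, v1] with hffdef
    have hff : ∀ x : V, ∑ j : Fin 4, ⟪ff j, x⟫ • ff j = x := by
      intro x
      rw [Fin.sum_univ_four]
      simp only [hffdef, Matrix.cons_val_zero, Matrix.cons_val_one, Matrix.head_cons,
        Matrix.cons_val_two, Matrix.tail_cons, Matrix.cons_val_three]
      exact (hexp x).symm
    have he : ∀ x : V, ∑ i, ⟪stdOrthonormalBasis ℝ V i, x⟫ • stdOrthonormalBasis ℝ V i = x :=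
      fun x => (stdOrthonormalBasis ℝ V).sum_repr' x
    have hid : ∀ x y : V, ⟪(LinearMap.id : V →ₗ[ℝ] V) x, y⟫ = ⟪x, (LinearMap.id : V →ₗ[ℝ] V) y⟫ := by
      intro x y; simp
    have hB1 : ∀ (y z : V) (c : Fin (finrank ℝ V) → ℝ) (g : Fin (finrank ℝ V) → V) (w : V),
        L (∑ i, c i • g i) y z w = ∑ i, c i * L (g i) y z w := by
      intro y z c g w
      simp [map_sum, map_smul, LinearMap.sum_apply, LinearMap.smul_apply, smul_eq_mul]
    have hB2 : ∀ (x y z : V) (c : Fin 4 → ℝ) (g : Fin 4 → V),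
        L x y z (∑ j, c j • g j) = ∑ j, c j * L x y z (g j) := by
      intro x y z c g
      simp [map_sum, map_smul, smul_eq_mul]
    have hricci : ∀ y z : V, ricci L y z = ∑ k : Fin 4, L (ff k) y z (ff k) := by
      intro y z
      have h := sum_diag_transfer (fun i => stdOrthonormalBasis ℝ V i) ff he hff
        LinearMap.id hid (fun x w => L x y z w) (hB1 y z) (hB2 · y z)
      simpa [ricci] using h
    have hB1' : ∀ (x w : V) (c : Fin (finrank ℝ V) → ℝ) (g : Fin (finrank ℝ V) → V) (z : V),
        L x (∑ i, c i • g i) z w = ∑ i, c i * L x (g i) z w := by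
      intro x w c g z
      simp [map_sum, map_smul, LinearMap.sum_apply, LinearMap.smul_apply, smul_eq_mul]
    have hB2' : ∀ (x w y : V) (c : Fin 4 → ℝ) (g : Fin 4 → V),
        L x y (∑ j, c j • g j) w = ∑ j, c j * L x y (g j) w := by
      intro x w y c g
      simp [map_sum, map_smul, LinearMap.sum_apply, LinearMap.smul_apply, smul_eq_mul]
    -- values on the adapted frame
    have hval : ∀ k l : Fin 4, True := fun _ _ => trivial
    have htau : scalarCurv L = -(2*a) - 2*b := by
      have step : scalarCurv L = ∑ k : Fin 4, ∑ l : Fin 4, L (ff k) (ff l) (ff l) (ff k) := by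
        calc scalarCurv L
            = ∑ j, ∑ k : Fin 4, L (ff k) (stdOrthonormalBasis ℝ V j) (stdOrthonormalBasis ℝ V j) (ff k) := by
              simp only [scalarCurv]
              exact Finset.sum_congr rfl fun j _ => hricci _ _
          _ = ∑ k : Fin 4, ∑ j, L (ff k) (stdOrthonormalBasis ℝ V j) (stdOrthonormalBasis ℝ V j) (ff k) :=
              Finset.sum_comm
          _ = ∑ k : Fin 4, ∑ l : Fin 4, L (ff k) (ff l) (ff l) (ff k) := by
              refine Finset.sum_congr rfl fun k _ => ?_
              have h := sum_diag_transfer (fun i => stdOrthonormalBasis ℝ V i) ff he hff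
                LinearMap.id hid (fun y z => L (ff k) y z (ff k))
                (fun c g y => hB1' (ff k) (ff k) c g y) (fun x c g => hB2' (ff k) (ff k) x c g)
              simpa using h
      rw [step]
      simp only [Fin.sum_univ_four, hffdef, Matrix.cons_val_zero, Matrix.cons_val_one,
        Matrix.head_cons, Matrix.cons_val_two, Matrix.tail_cons, Matrix.cons_val_three]
      simp only [hstruct, Dfun]
      rw [o00, o11, o01, o10, m00, m11, m01, m10, c00, c01, c10, c11, r00, r01, r10, r11]
      ring
    have htaustar : scalarCurvStar P L = -(2*a) + 2*b := by
      have hricciS : ∀ y z : V, ricciStar P L y z = ∑ k : Fin 4, L (P (ff k)) y z (ff k) := by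
        intro y z
        have h := sum_diag_transfer (fun i => stdOrthonormalBasis ℝ V i) ff he hff
          P hPsym (fun x w => L x y z w) (hB1 y z) (hB2 · y z)
        simpa [ricciStar] using h
      have step : scalarCurvStar P L = ∑ k : Fin 4, ∑ l : Fin 4, L (P (ff k)) (ff l) (ff l) (ff k) := by
        calc scalarCurvStar P L
            = ∑ j, ∑ k : Fin 4, L (P (ff k)) (stdOrthonormalBasis ℝ V j) (stdOrthonormalBasis ℝ V j) (ff k) := by
              simp only [scalarCurvStar]
              exact Finset.sum_congr rfl fun j _ => hricciS _ _
          _ = ∑ k : Fin 4, ∑ j, L (P (ff k)) (stdOrthonormalBasis ℝ V j) (stdOrthonormalBasis ℝ V j) (ff k) :=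
              Finset.sum_comm
          _ = ∑ k : Fin 4, ∑ l : Fin 4, L (P (ff k)) (ff l) (ff l) (ff k) := by
              refine Finset.sum_congr rfl fun k _ => ?_
              have h := sum_diag_transfer (fun i => stdOrthonormalBasis ℝ V i) ff he hff
                LinearMap.id hid (fun y z => L (P (ff k)) y z (ff k))
                (fun c g y => hB1' (P (ff k)) (ff k) c g y)
                (fun x c g => hB2' (P (ff k)) (ff k) x c g)
              simpa using h
      rw [step]
      simp only [Fin.sum_univ_four, hffdef, Matrix.cons_val_zero, Matrix.cons_val_one,
        Matrix.head_cons, Matrix.cons_val_two, Matrix.tail_cons, Matrix.cons_val_three]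
      simp only [hPu0, hPu1, hPv0, hPv1, map_neg, LinearMap.neg_apply]
      simp only [hstruct, Dfun]
      rw [o00, o11, o01, o10, m00, m11, m01, m10, c00, c01, c10, c11, r00, r01, r10, r11]
      simp only [inner_neg_right, m00, m11]
      ring
    intro x y z w
    rw [hstruct x y z w, htau, htaustar]
    simp only [pi1, pi2, pi3, psi1, Dfun]
    rw [hg y z, hg x w, hg x z, hg y w, hgP y z, hgP x w, hgP x z, hgP y w]
    ring
  · -- backward direction
    intro hform x y z w
    rw [hform x y (P z) (P w), hform x y z w]
    simp only [pi1, pi2, pi3, psi1, hP2]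
    ring
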